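/- Let G be a finite simple bipartite graph with parts A and B such that every vertex of A has degree 3 and every vertex of B has degree 2, and let n = |A| (so |B| = 3n/2). Let μ(G) denote the maximum size of a subset B' ⊆ B whose vertices have pairwise disjoint neighborhoods in G. Then there exists a set S ⊆ B with |S| ≤ n/2 such that the bipartite subgraph of G induced on A ∪ (B \ S) contains a matching saturating every vertex of A, and |N(S)| = n/2 + μ(G). -/

import Mathlib

open Finset

/-- The vertices of `B'` have pairwise disjoint neighborhoods in `G`. -/
def PDisjNbrs {V : Type*} (G : SimpleGraph V) (B' : Finset V) : Prop :=
  ∀ b₁ ∈ B', ∀ b₂ ∈ B', b₁ ≠ b₂ → ∀ a, ¬(G.Adj a b₁ ∧ G.Adj a b₂)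

/-- `N(S)`: the vertices of `A` adjacent to at least one vertex of `S`. -/
def nbhd {V : Type*} [DecidableEq V] (G : SimpleGraph V) [DecidableRel G.Adj]
    (A S : Finset V) : Finset V :=
  A.filter fun a => ∃ b ∈ S, G.Adj a b

/-- The bipartite subgraph of `G` induced on `A ∪ C` contains a matching saturating
every vertex of `A`, encoded by an injective choice of partners. -/
def SatMatch {V : Type*} (G : SimpleGraph V) (A C : Finset V) : Prop :=
  ∃ f : V → V, Set.InjOn f ↑A ∧ ∀ a ∈ A, f a ∈ C ∧ G.Adj a (f a)

namespace Stmt0Aux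

variable {V : Type*} [DecidableEq V] (G : SimpleGraph V) [DecidableRel G.Adj]

/-- edges of `E'` touched by the vertex set `X` -/
def covE (E' X : Finset V) : Finset V := E'.filter (fun b => ∃ a ∈ X, G.Adj a b)

/-- degree of `a` into the edge set `E'` -/
def dg (E' : Finset V) (a : V) : ℕ := (E'.filter (fun b => G.Adj a b)).card

lemma dg_mono {E'' E' : Finset V} (h : E'' ⊆ E') (a : V) : dg G E'' a ≤ dg G E' a :=
  Finset.card_le_card (Finset.filter_subset_filter _ h)

/-- double counting -/
lemma dc (X E' : Finset V) :
    ∑ a ∈ X, dg G E' a = ∑ b ∈ E', (X.filter (fun a => G.Adj a b)).card := by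
  unfold dg
  simp_rw [Finset.card_filter]
  exact Finset.sum_comm

lemma covE_card (E' X : Finset V) :
    (covE G E' X).card = ∑ b ∈ E', if (∃ a ∈ X, G.Adj a b) then 1 else 0 :=
  Finset.card_filter _ _

lemma submod (E' X Y : Finset V) :
    (covE G E' (X ∪ Y)).card + (covE G E' (X ∩ Y)).card
      ≤ (covE G E' X).card + (covE G E' Y).card := by
  simp only [covE_card]
  rw [← Finset.sum_add_distrib, ← Finset.sum_add_distrib]
  apply Finset.sum_le_sum
  intro b _
  have hu : (∃ a ∈ X ∪ Y, G.Adj a b) ↔ (∃ a ∈ X, G.Adj a b) ∨ (∃ a ∈ Y, G.Adj a b) := by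
    constructor
    · rintro ⟨a, ha, hadj⟩
      rcases Finset.mem_union.mp ha with h | h
      · exact Or.inl ⟨a, h, hadj⟩
      · exact Or.inr ⟨a, h, hadj⟩
    · rintro (⟨a, ha, hadj⟩ | ⟨a, ha, hadj⟩)
      · exact ⟨a, Finset.mem_union_left _ ha, hadj⟩
      · exact ⟨a, Finset.mem_union_right _ ha, hadj⟩
  have hi : (∃ a ∈ X ∩ Y, G.Adj a b) → (∃ a ∈ X, G.Adj a b) ∧ (∃ a ∈ Y, G.Adj a b) := by
    rintro ⟨a, ha, hadj⟩
    rw [Finset.mem_inter] at ha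
    exact ⟨⟨a, ha.1, hadj⟩, ⟨a, ha.2, hadj⟩⟩
  by_cases hx : ∃ a ∈ X, G.Adj a b <;> by_cases hy : ∃ a ∈ Y, G.Adj a b
  · rw [if_pos hx, if_pos hy, if_pos (hu.mpr (Or.inl hx))]
    split_ifs <;> omega
  · have hiy : ¬ ∃ a ∈ X ∩ Y, G.Adj a b := fun h => hy (hi h).2
    rw [if_pos hx, if_neg hy, if_pos (hu.mpr (Or.inl hx)), if_neg hiy]
  · have hix : ¬ ∃ a ∈ X ∩ Y, G.Adj a b := fun h => hx (hi h).1
    rw [if_neg hx, if_pos hy, if_pos (hu.mpr (Or.inr hy)), if_neg hix]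
  · have hiu : ¬ ∃ a ∈ X ∪ Y, G.Adj a b := fun h => (hu.mp h).elim hx hy
    have hix : ¬ ∃ a ∈ X ∩ Y, G.Adj a b := fun h => hx (hi h).1
    rw [if_neg hx, if_neg hy, if_neg hiu, if_neg hix]

/-- The key step: if Hall's condition holds and there is positive excess, one can remove
an edge incident to a degree-3 vertex keeping Hall's condition. -/
lemma step (A E' : Finset V)
    (hb2 : ∀ b ∈ E', (A.filter (fun a => G.Adj a b)).card = 2)
    (hd3 : ∀ a ∈ A, dg G E' a ≤ 3)
    (hH : ∀ X ⊆ A, X.card ≤ (covE G E' X).card)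
    (hexc : A.card < E'.card) :
    ∃ u ∈ A, dg G E' u = 3 ∧ ∃ b ∈ E', G.Adj u b ∧
      ∀ X ⊆ A, X.card ≤ (covE G (E'.erase b) X).card := by
  classical
  set 𝒯 : Finset (Finset V) := A.powerset.filter (fun X => (covE G E' X).card = X.card)
    with h𝒯
  have hmem𝒯 : ∀ X : Finset V, X ∈ 𝒯 ↔ X ⊆ A ∧ (covE G E' X).card = X.card := by
    intro X; simp [h𝒯, Finset.mem_filter, Finset.mem_powerset]
  have hTunion : ∀ X ∈ 𝒯, ∀ Y ∈ 𝒯, X ∪ Y ∈ 𝒯 := by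
    intro X hX Y hY
    rw [hmem𝒯] at hX hY ⊢
    obtain ⟨hXA, hXt⟩ := hX; obtain ⟨hYA, hYt⟩ := hY
    have hsub : X ∪ Y ⊆ A := Finset.union_subset hXA hYA
    have h1 := hH (X ∪ Y) hsub
    have h2 := hH (X ∩ Y) (Finset.Subset.trans Finset.inter_subset_left hXA)
    have h3 := submod G E' X Y
    have h4 : (X ∪ Y).card + (X ∩ Y).card = X.card + Y.card :=
      Finset.card_union_add_card_inter X Y
    exact ⟨hsub, by omega⟩
  have key : ∀ s : Finset (Finset V), s ⊆ 𝒯 → s.sup id ∈ 𝒯 := by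
    intro s
    induction s using Finset.induction_on with
    | empty =>
      intro _
      rw [hmem𝒯]
      constructor
      · simp
      · simp [covE]
    | insert _ _ hnm ih =>
      rename_i X s'
      intro hsub
      rw [Finset.sup_insert]
      exact hTunion _ (hsub (Finset.mem_insert_self _ _)) _
        (ih (fun x hx => hsub (Finset.mem_insert_of_mem hx)))
  set T : Finset V := 𝒯.sup id with hT
  have hTmem : T ∈ 𝒯 := key 𝒯 (Finset.Subset.refl _)
  have hTA : T ⊆ A := ((hmem𝒯 T).mp hTmem).1
  have hTt : (covE G E' T).card = T.card := ((hmem𝒯 T).mp hTmem).2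
  have hsubT : ∀ X : Finset V, X ⊆ A → (covE G E' X).card = X.card → X ⊆ T := by
    intro X h1 h2
    exact Finset.le_sup (f := id) ((hmem𝒯 X).mpr ⟨h1, h2⟩)
  set D3 : Finset V := A.filter (fun a => dg G E' a = 3) with hD3
  have hsum : ∑ a ∈ A, dg G E' a = 2 * E'.card := by
    rw [dc G A E', Finset.sum_congr rfl (fun b hb => hb2 b hb), Finset.sum_const,
      smul_eq_mul, mul_comm]
  have hD3card : 2 * (E'.card - A.card) ≤ D3.card := by
    have h1 : ∑ a ∈ A, dg G E' a ≤ ∑ a ∈ A, (2 + if dg G E' a = 3 then 1 else 0) := by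
      apply Finset.sum_le_sum
      intro a ha
      have := hd3 a ha
      split_ifs with h <;> omega
    rw [Finset.sum_add_distrib, Finset.sum_const, smul_eq_mul, ← Finset.card_filter] at h1
    rw [hsum] at h1
    have : (Finset.filter (fun a => dg G E' a = 3) A).card = D3.card := by rw [hD3]
    omega
  have main : ∃ u ∈ A, dg G E' u = 3 ∧ ∃ b ∈ E', G.Adj u b ∧
      ∀ X, X ⊆ A → (covE G E' X).card = X.card → ¬ (∃ a ∈ X, G.Adj a b) := by
    by_contra hcon
    push_neg at hcon
    have htchT : ∀ u ∈ A, dg G E' u = 3 → ∀ b ∈ E', G.Adj u b → ∃ a ∈ T, G.Adj a b := by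
      intro u hu h3 b hb hadj
      obtain ⟨X, hXA, hXt, a, haX, haadj⟩ := hcon u hu h3 b hb hadj
      exact ⟨a, hsubT X hXA hXt haX, haadj⟩
    by_cases hD3T : D3 ⊆ T
    · -- counting contradiction
      set E'' : Finset V := E'.filter (fun b => ¬ ∃ a ∈ T, G.Adj a b) with hE''
      have hcards : (covE G E' T).card + E''.card = E'.card :=
        Finset.card_filter_add_card_filter_not _
      have hs1 : ∑ a ∈ A \ T, dg G E'' a = 2 * E''.card := by
        rw [dc]
        have : ∀ b ∈ E'', ((A \ T).filter (fun a => G.Adj a b)).card = 2 := by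
          intro b hb
          have hbE' : b ∈ E' := Finset.filter_subset _ _ hb
          have hnot : ¬ ∃ a ∈ T, G.Adj a b := (Finset.mem_filter.mp hb).2
          have heq : (A \ T).filter (fun a => G.Adj a b) = A.filter (fun a => G.Adj a b) := by
            ext a
            simp only [Finset.mem_filter, Finset.mem_sdiff]
            constructor
            · rintro ⟨⟨h1, _⟩, h2⟩; exact ⟨h1, h2⟩
            · rintro ⟨h1, h2⟩
              exact ⟨⟨h1, fun haT => hnot ⟨a, haT, h2⟩⟩, h2⟩
          rw [heq]; exact hb2 b hbE'
        rw [Finset.sum_congr rfl this, Finset.sum_const, smul_eq_mul, mul_comm]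
      have hs2 : ∑ a ∈ A \ T, dg G E'' a ≤ 2 * (A \ T).card := by
        have : ∀ a ∈ A \ T, dg G E'' a ≤ 2 := by
          intro a ha
          obtain ⟨haA, haT⟩ := Finset.mem_sdiff.mp ha
          have h2 : dg G E' a ≤ 2 := by
            by_contra h
            have : dg G E' a = 3 := by have := hd3 a haA; omega
            exact haT (hD3T (Finset.mem_filter.mpr ⟨haA, this⟩))
          exact le_trans (dg_mono G (Finset.filter_subset _ _) a) h2
        calc ∑ a ∈ A \ T, dg G E'' a ≤ ∑ _a ∈ A \ T, 2 := Finset.sum_le_sum this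
          _ = 2 * (A \ T).card := by rw [Finset.sum_const, smul_eq_mul, mul_comm]
      have hTcard : T.card ≤ A.card := Finset.card_le_card hTA
      have hATcard : (A \ T).card = A.card - T.card := Finset.card_sdiff_of_subset hTA
      omega
    · obtain ⟨u, huD3, huT⟩ := Finset.not_subset.mp hD3T
      have huA : u ∈ A := (Finset.mem_filter.mp huD3).1
      have hu3 : dg G E' u = 3 := (Finset.mem_filter.mp huD3).2
      have hX := hH (insert u T) (Finset.insert_subset huA hTA)
      have hcov : covE G E' (insert u T) = covE G E' T := by
        ext b
        simp only [covE, Finset.mem_filter]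
        constructor
        · rintro ⟨hb, a, ha, hadj⟩
          rcases Finset.mem_insert.mp ha with rfl | haT
          · exact ⟨hb, htchT a huA hu3 b hb hadj⟩
          · exact ⟨hb, a, haT, hadj⟩
        · rintro ⟨hb, a, ha, hadj⟩
          exact ⟨hb, a, Finset.mem_insert_of_mem ha, hadj⟩
      rw [hcov, hTt, Finset.card_insert_of_notMem huT] at hX
      omega
  obtain ⟨u, huA, hu3, b, hbE, hadj, hnt⟩ := main
  refine ⟨u, huA, hu3, b, hbE, hadj, ?_⟩
  intro X hXA
  have hXH := hH X hXA
  have hc : (covE G E' X).card ≤ (covE G (E'.erase b) X).card + 1 := by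
    have hss : covE G E' X ⊆ insert b (covE G (E'.erase b) X) := by
      intro c hc
      simp only [covE, Finset.mem_filter, Finset.mem_insert, Finset.mem_erase] at *
      rcases eq_or_ne c b with rfl | hne
      · exact Or.inl rfl
      · exact Or.inr ⟨⟨hne, hc.1⟩, hc.2⟩
    calc (covE G E' X).card ≤ (insert b (covE G (E'.erase b) X)).card :=
        Finset.card_le_card hss
      _ ≤ (covE G (E'.erase b) X).card + 1 := Finset.card_insert_le _ _
  by_cases htight : (covE G E' X).card = X.card
  · have hb' : ¬ ∃ a ∈ X, G.Adj a b := hnt X hXA htight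
    have heq : covE G (E'.erase b) X = covE G E' X := by
      ext c
      simp only [covE, Finset.mem_filter, Finset.mem_erase]
      constructor
      · rintro ⟨⟨_, h⟩, h2⟩; exact ⟨h, h2⟩
      · rintro ⟨h1, h2⟩
        refine ⟨⟨?_, h1⟩, h2⟩
        rintro rfl
        exact hb' h2
    rw [heq]
    omega
  · have : X.card < (covE G E' X).card := lt_of_le_of_ne hXH (Ne.symm htight)
    omega

/-- if `a` is adjacent to some `m ∈ B` missing from `E' ⊆ B`, then `dg E' a ≤ 2`. -/
lemma dg_lt {B E' : Finset V} (hE' : E' ⊆ B) {a m : V} (hm : m ∈ B) (hmE : m ∉ E')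
    (hadj : G.Adj a m) (hdB : dg G B a = 3) : dg G E' a ≤ 2 := by
  have hsub : E' ⊆ B.erase m := fun x hx =>
    Finset.mem_erase.mpr ⟨fun h => hmE (h ▸ hx), hE' hx⟩
  have hmem : m ∈ B.filter (fun b => G.Adj a b) := Finset.mem_filter.mpr ⟨hm, hadj⟩
  have h1 : dg G (B.erase m) a = dg G B a - 1 := by
    show ((B.erase m).filter (fun b => G.Adj a b)).card
      = (B.filter (fun b => G.Adj a b)).card - 1
    rw [Finset.filter_erase, Finset.card_erase_of_mem hmem]
  have h2 := dg_mono G hsub a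
  omega

lemma build (A B M : Finset V) (hMB : M ⊆ B)
    (hb2 : ∀ b ∈ B, (A.filter (fun a => G.Adj a b)).card = 2)
    (hdgB : ∀ a ∈ A, dg G B a = 3)
    (hmax : ∀ b ∈ B \ M, ∀ a₁ ∈ A, ∀ a₂ ∈ A, a₁ ∉ nbhd G A M → a₂ ∉ nbhd G A M →
      G.Adj a₁ b → G.Adj a₂ b → a₁ = a₂)
    (j : ℕ) :
    ∀ F W : Finset V, F ⊆ B \ M → W ⊆ A →
    (∀ w ∈ W, w ∉ nbhd G A M) → nbhd G A F ⊆ nbhd G A M ∪ W → W ⊆ nbhd G A F →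
    W.card = F.card →
    (∀ X ⊆ A, X.card ≤ (covE G ((B \ M) \ F) X).card) →
    ((B \ M) \ F).card = A.card + j →
    ∃ F' W' : Finset V, F' ⊆ B \ M ∧ W' ⊆ A ∧ (∀ w ∈ W', w ∉ nbhd G A M) ∧
      nbhd G A F' ⊆ nbhd G A M ∪ W' ∧ W' ⊆ nbhd G A F' ∧ W'.card = F'.card ∧
      (∀ X ⊆ A, X.card ≤ (covE G ((B \ M) \ F') X).card) ∧
      ((B \ M) \ F').card = A.card := by
  induction j with
  | zero =>
    intro F W h1 h2 h3 h4 h5 h6 h7 h8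
    exact ⟨F, W, h1, h2, h3, h4, h5, h6, h7, by omega⟩
  | succ j ih =>
    intro F W hFBM hWA hWnc hsub1 hsub2 hWF hHall hcard
    set E' : Finset V := (B \ M) \ F with hE'def
    have hE'B : E' ⊆ B := fun x hx =>
      (Finset.mem_sdiff.mp ((Finset.mem_sdiff.mp hx).1)).1
    obtain ⟨u, huA, hu3, b, hbE, hadj, hHall'⟩ := step G A E'
      (fun b hb => hb2 b (hE'B hb))
      (fun a ha => le_of_le_of_eq (dg_mono G hE'B a) (hdgB a ha))
      hHall (by omega)
    have hbBM : b ∈ B \ M := (Finset.mem_sdiff.mp hbE).1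
    have hbF : b ∉ F := (Finset.mem_sdiff.mp hbE).2
    -- u is not covered by M
    have hunc : u ∉ nbhd G A M := by
      intro hu
      obtain ⟨_, m, hmM, hadjm⟩ := Finset.mem_filter.mp hu
      have hmE : m ∉ E' := by
        intro h
        exact (Finset.mem_sdiff.mp ((Finset.mem_sdiff.mp h).1)).2 hmM
      have := dg_lt G hE'B (hMB hmM) hmE hadjm (hdgB u huA)
      omega
    -- u is not in W
    have hunW : u ∉ W := by
      intro hu
      obtain ⟨_, f, hfF, hadjf⟩ := Finset.mem_filter.mp (hsub2 hu)
      have hfE : f ∉ E' := fun h => (Finset.mem_sdiff.mp h).2 hfF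
      have hfB : f ∈ B := (Finset.mem_sdiff.mp (hFBM hfF)).1
      have := dg_lt G hE'B hfB hfE hadjf (hdgB u huA)
      omega
    have hE'' : (B \ M) \ (insert b F) = E'.erase b := by
      ext x
      simp only [hE'def, Finset.mem_sdiff, Finset.mem_erase, Finset.mem_insert]
      tauto
    have hnb' : nbhd G A (insert b F) ⊆ nbhd G A M ∪ insert u W := by
      intro a ha
      obtain ⟨haA, e, heF, hadje⟩ := Finset.mem_filter.mp ha
      rcases Finset.mem_insert.mp heF with rfl | heF'
      · by_cases hc : a ∈ nbhd G A M
        · exact Finset.mem_union_left _ hc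
        · have : a = u := hmax e hbBM a haA u huA hc hunc hadje hadj
          exact Finset.mem_union_right _ (this ▸ Finset.mem_insert_self _ _)
      · have : a ∈ nbhd G A F := Finset.mem_filter.mpr ⟨haA, e, heF', hadje⟩
        rcases Finset.mem_union.mp (hsub1 this) with h | h
        · exact Finset.mem_union_left _ h
        · exact Finset.mem_union_right _ (Finset.mem_insert_of_mem h)
    have hnb2 : insert u W ⊆ nbhd G A (insert b F) := by
      intro w hw
      rcases Finset.mem_insert.mp hw with rfl | hwW
      · exact Finset.mem_filter.mpr ⟨huA, b, Finset.mem_insert_self _ _, hadj⟩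
      · obtain ⟨hwA, f, hfF, hadjf⟩ := Finset.mem_filter.mp (hsub2 hwW)
        exact Finset.mem_filter.mpr ⟨hwA, f, Finset.mem_insert_of_mem hfF, hadjf⟩
    refine ih (insert b F) (insert u W) (Finset.insert_subset hbBM hFBM)
      (Finset.insert_subset huA hWA) ?_ hnb' hnb2 ?_ ?_ ?_
    · intro w hw
      rcases Finset.mem_insert.mp hw with rfl | hwW
      · exact hunc
      · exact hWnc w hwW
    · rw [Finset.card_insert_of_notMem hunW, Finset.card_insert_of_notMem hbF, hWF]
    · intro X hX
      rw [hE'']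
      exact hHall' X hX
    · rw [hE'', Finset.card_erase_of_mem hbE]
      omega

end Stmt0Aux

theorem stmt_0 {V : Type*} [Fintype V] [DecidableEq V] (G : SimpleGraph V)
    [DecidableRel G.Adj] (A B : Finset V) (hdisj : Disjoint A B)
    (hbip : ∀ v w, G.Adj v w → (v ∈ A ∧ w ∈ B) ∨ (v ∈ B ∧ w ∈ A))
    (hdegA : ∀ a ∈ A, G.degree a = 3) (hdegB : ∀ b ∈ B, G.degree b = 2)
    (mu : ℕ) (hmu₁ : ∃ B' ⊆ B, PDisjNbrs G B' ∧ B'.card = mu)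
    (hmu₂ : ∀ B' ⊆ B, PDisjNbrs G B' → B'.card ≤ mu) :
    ∃ S ⊆ B, S.card ≤ A.card / 2 ∧ SatMatch G A (B \ S) ∧
      (nbhd G A S).card = A.card / 2 + mu := by
  classical
  obtain ⟨M, hMB, hMdisj, hMcard⟩ := hmu₁
  have hb2 : ∀ b ∈ B, (A.filter (fun a => G.Adj a b)).card = 2 := by
    intro b hb
    have heq : A.filter (fun a => G.Adj a b) = G.neighborFinset b := by
      ext a
      simp only [Finset.mem_filter, SimpleGraph.mem_neighborFinset]
      constructor
      · rintro ⟨_, h⟩; exact h.symm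
      · intro h
        rcases hbip b a h with ⟨hbA, _⟩ | ⟨_, haA⟩
        · exact absurd hbA (Finset.disjoint_right.mp hdisj hb)
        · exact ⟨haA, h.symm⟩
    rw [heq, SimpleGraph.card_neighborFinset_eq_degree]
    exact hdegB b hb
  have hdgB : ∀ a ∈ A, Stmt0Aux.dg G B a = 3 := by
    intro a ha
    have heq : B.filter (fun b => G.Adj a b) = G.neighborFinset a := by
      ext b
      simp only [Finset.mem_filter, SimpleGraph.mem_neighborFinset]
      constructor
      · rintro ⟨_, h⟩; exact h
      · intro h
        rcases hbip a b h with ⟨_, hbB⟩ | ⟨haB, _⟩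
        · exact ⟨hbB, h⟩
        · exact absurd haB (Finset.disjoint_left.mp hdisj ha)
    show (B.filter (fun b => G.Adj a b)).card = 3
    rw [heq, SimpleGraph.card_neighborFinset_eq_degree]
    exact hdegA a ha
  -- handshake
  have hhs : 3 * A.card = 2 * B.card := by
    have h1 : ∑ a ∈ A, Stmt0Aux.dg G B a = 2 * B.card := by
      rw [Stmt0Aux.dc G A B, Finset.sum_congr rfl hb2, Finset.sum_const, smul_eq_mul,
        mul_comm]
    have h2 : ∑ a ∈ A, Stmt0Aux.dg G B a = 3 * A.card := by
      rw [Finset.sum_congr rfl hdgB, Finset.sum_const, smul_eq_mul, mul_comm]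
    omega
  obtain ⟨m, hm⟩ : ∃ m, A.card = 2 * m := ⟨A.card / 2, by omega⟩
  have hBcard : B.card = 3 * m := by omega
  -- the covered vertices
  have hcov_eq : nbhd G A M = M.biUnion (fun mb => A.filter (fun a => G.Adj a mb)) := by
    ext a
    simp only [nbhd, Finset.mem_filter, Finset.mem_biUnion]
    tauto
  have hcovdisj : ∀ x ∈ M, ∀ y ∈ M, x ≠ y →
      Disjoint (A.filter (fun a => G.Adj a x)) (A.filter (fun a => G.Adj a y)) := by
    intro x hx y hy hxy
    rw [Finset.disjoint_left]
    intro a hax hay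
    exact hMdisj x hx y hy hxy a ⟨(Finset.mem_filter.mp hax).2, (Finset.mem_filter.mp hay).2⟩
  have hcovcard : (nbhd G A M).card = 2 * mu := by
    rw [hcov_eq, Finset.card_biUnion hcovdisj]
    rw [Finset.sum_congr rfl (fun mb hmb => hb2 mb (hMB hmb)), Finset.sum_const,
      smul_eq_mul, hMcard, mul_comm]
  have hmu_le : 2 * mu ≤ A.card := by
    rw [← hcovcard]
    exact Finset.card_le_card (Finset.filter_subset _ _)
  -- maximality of M
  have hmax : ∀ b ∈ B \ M, ∀ a₁ ∈ A, ∀ a₂ ∈ A, a₁ ∉ nbhd G A M → a₂ ∉ nbhd G A M →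
      G.Adj a₁ b → G.Adj a₂ b → a₁ = a₂ := by
    intro b hbBM a₁ ha₁ a₂ ha₂ hnc₁ hnc₂ hadj₁ hadj₂
    by_contra hne
    obtain ⟨hbB, hbM⟩ := Finset.mem_sdiff.mp hbBM
    have hpair : ({a₁, a₂} : Finset V) ⊆ A.filter (fun a => G.Adj a b) := by
      intro x hx
      rcases Finset.mem_insert.mp hx with rfl | hx
      · exact Finset.mem_filter.mpr ⟨ha₁, hadj₁⟩
      · rw [Finset.mem_singleton] at hx
        subst hx
        exact Finset.mem_filter.mpr ⟨ha₂, hadj₂⟩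
    have hpcard : ({a₁, a₂} : Finset V).card = 2 := Finset.card_pair hne
    have hfeq : A.filter (fun a => G.Adj a b) = {a₁, a₂} :=
      (Finset.eq_of_subset_of_card_le hpair (by rw [hb2 b hbB, hpcard])).symm
    have hPD : PDisjNbrs G (insert b M) := by
      rintro b₁ hb₁ b₂ hb₂ hne' a ⟨hA1, hA2⟩
      have hkey : ∀ mm ∈ M, G.Adj a b → G.Adj a mm → False := by
        intro mm hmM hab ham
        have haA : a ∈ A := by
          rcases hbip a b hab with ⟨h, _⟩ | ⟨_, h⟩
          · exact h
          · exact absurd hbB (Finset.disjoint_left.mp hdisj h)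
        have hacov : a ∈ nbhd G A M := Finset.mem_filter.mpr ⟨haA, mm, hmM, ham⟩
        have hamem : a ∈ ({a₁, a₂} : Finset V) := hfeq ▸ Finset.mem_filter.mpr ⟨haA, hab⟩
        rcases Finset.mem_insert.mp hamem with rfl | h
        · exact hnc₁ hacov
        · rw [Finset.mem_singleton] at h
          subst h
          exact hnc₂ hacov
      rcases Finset.mem_insert.mp hb₁ with h₁ | h₁ <;>
        rcases Finset.mem_insert.mp hb₂ with h₂ | h₂
      · exact hne' (h₁.trans h₂.symm)
      · exact hkey b₂ h₂ (h₁ ▸ hA1) hA2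
      · exact hkey b₁ h₁ (h₂ ▸ hA2) hA1
      · exact hMdisj b₁ h₁ b₂ h₂ hne' a ⟨hA1, hA2⟩
    have := hmu₂ (insert b M) (Finset.insert_subset hbB hMB) hPD
    rw [Finset.card_insert_of_notMem hbM, hMcard] at this
    omega
  -- each vertex of A has at most one M-edge
  have hM1 : ∀ a ∈ A, (M.filter (fun c => G.Adj a c)).card ≤ 1 := by
    intro a _
    by_contra h
    have h2 : 1 < (M.filter (fun c => G.Adj a c)).card := by omega
    obtain ⟨x, hx, y, hy, hxy⟩ := Finset.one_lt_card.mp h2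
    exact hMdisj x (Finset.mem_filter.mp hx).1 y (Finset.mem_filter.mp hy).1 hxy a
      ⟨(Finset.mem_filter.mp hx).2, (Finset.mem_filter.mp hy).2⟩
  have hdg2 : ∀ a ∈ A, 2 ≤ Stmt0Aux.dg G (B \ M) a := by
    intro a ha
    have heq : (B \ M).filter (fun c => G.Adj a c)
        = (B.filter (fun c => G.Adj a c)) \ (M.filter (fun c => G.Adj a c)) := by
      ext x
      simp only [Finset.mem_filter, Finset.mem_sdiff]
      tauto
    have h4 : ((B \ M).filter (fun c => G.Adj a c)).card
        = ((B.filter (fun c => G.Adj a c)) \ (M.filter (fun c => G.Adj a c))).card := by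
      rw [heq]
    have h5 : ((B.filter (fun c => G.Adj a c)) \ (M.filter (fun c => G.Adj a c))).card
        = (B.filter (fun c => G.Adj a c)).card - (M.filter (fun c => G.Adj a c)).card :=
      Finset.card_sdiff_of_subset (Finset.filter_subset_filter _ hMB)
    have h3 : (B.filter (fun c => G.Adj a c)).card = 3 := hdgB a ha
    have h6 := hM1 a ha
    show 2 ≤ ((B \ M).filter (fun c => G.Adj a c)).card
    omega
  -- initial Hall condition
  have hHall0 : ∀ X ⊆ A, X.card ≤ (Stmt0Aux.covE G (B \ M) X).card := by
    intro X hXA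
    have hlow : 2 * X.card ≤ ∑ a ∈ X, Stmt0Aux.dg G (B \ M) a := by
      calc 2 * X.card = ∑ _a ∈ X, 2 := by rw [Finset.sum_const, smul_eq_mul, mul_comm]
        _ ≤ _ := Finset.sum_le_sum (fun a haX => hdg2 a (hXA haX))
    have hup : ∑ a ∈ X, Stmt0Aux.dg G (B \ M) a
        ≤ 2 * (Stmt0Aux.covE G (B \ M) X).card := by
      rw [Stmt0Aux.dc]
      calc ∑ b ∈ B \ M, (X.filter (fun a => G.Adj a b)).card
          ≤ ∑ b ∈ B \ M, (if (∃ a ∈ X, G.Adj a b) then 2 else 0) := by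
            apply Finset.sum_le_sum
            intro b hb
            split_ifs with h
            · calc (X.filter (fun a => G.Adj a b)).card
                  ≤ (A.filter (fun a => G.Adj a b)).card :=
                    Finset.card_le_card (Finset.filter_subset_filter _ hXA)
                _ = 2 := hb2 b (Finset.mem_sdiff.mp hb).1
            · have hemp : X.filter (fun a => G.Adj a b) = ∅ := by
                rw [Finset.filter_eq_empty_iff]
                intro a haX hadj
                exact h ⟨a, haX, hadj⟩
              rw [hemp]
              simp
        _ = 2 * (Stmt0Aux.covE G (B \ M) X).card := by
            rw [Stmt0Aux.covE_card, Finset.mul_sum]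
            apply Finset.sum_congr rfl
            intro b _
            split_ifs <;> simp
    omega
  have hMle : M.card ≤ B.card := Finset.card_le_card hMB
  have hBMcard : (B \ M).card = A.card + (m - mu) := by
    rw [Finset.card_sdiff_of_subset hMB, hMcard]
    omega
  obtain ⟨F, W, hFBM, hWA, hWnc, hsub1, hsub2, hWF, hHallF, hcardF⟩ :=
    Stmt0Aux.build G A B M hMB hb2 hdgB hmax (m - mu) ∅ ∅
      (Finset.empty_subset _) (Finset.empty_subset _)
      (fun w hw => absurd hw (Finset.notMem_empty w))
      (by simp [nbhd]) (Finset.empty_subset _) rfl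
      (by rw [Finset.sdiff_empty]; exact hHall0)
      (by rw [Finset.sdiff_empty]; exact hBMcard)
  have hFle : F.card ≤ (B \ M).card := Finset.card_le_card hFBM
  have hFcard : F.card = m - mu := by
    have h1 : ((B \ M) \ F).card = (B \ M).card - F.card := Finset.card_sdiff_of_subset hFBM
    omega
  set S : Finset V := M ∪ F with hS
  have hMF : Disjoint M F := by
    rw [Finset.disjoint_right]
    intro x hx
    exact (Finset.mem_sdiff.mp (hFBM hx)).2
  have hScard : S.card = m := by
    rw [hS, Finset.card_union_of_disjoint hMF, hMcard]
    omega
  have hSB : S ⊆ B :=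
    Finset.union_subset hMB (fun x hx => (Finset.mem_sdiff.mp (hFBM hx)).1)
  have hBS : B \ S = (B \ M) \ F := by
    ext x
    simp only [hS, Finset.mem_sdiff, Finset.mem_union]
    tauto
  refine ⟨S, hSB, ?_, ?_, ?_⟩
  · rw [hScard]; omega
  · -- SatMatch
    have hhyp : ∀ s : Finset {x // x ∈ A},
        s.card ≤ (s.biUnion (fun a => (B \ S).filter (fun b => G.Adj a.1 b))).card := by
      intro s
      have hXA : s.image Subtype.val ⊆ A := by
        intro x hx
        obtain ⟨⟨v, hv⟩, _, rfl⟩ := Finset.mem_image.mp hx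
        exact hv
      have hbi : s.biUnion (fun a => (B \ S).filter (fun b => G.Adj a.1 b))
          = Stmt0Aux.covE G (B \ S) (s.image Subtype.val) := by
        ext b
        simp only [Stmt0Aux.covE, Finset.mem_biUnion, Finset.mem_filter, Finset.mem_image]
        constructor
        · rintro ⟨a, ha, hb, hadj⟩
          exact ⟨hb, a.1, ⟨a, ha, rfl⟩, hadj⟩
        · rintro ⟨hb, v, ⟨a, ha, rfl⟩, hadj⟩
          exact ⟨a, ha, hb, hadj⟩
      rw [hbi, ← Finset.card_image_of_injective s Subtype.val_injective, hBS]
      exact hHallF _ hXA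
    obtain ⟨f, hfinj, hft⟩ := (Finset.all_card_le_biUnion_card_iff_exists_injective
        (fun a : {x // x ∈ A} => (B \ S).filter (fun b => G.Adj a.1 b))).mp hhyp
    refine ⟨fun v => if h : v ∈ A then f ⟨v, h⟩ else v, ?_, ?_⟩
    · intro x hx y hy hxy
      rw [Finset.mem_coe] at hx hy
      dsimp only at hxy
      rw [dif_pos hx, dif_pos hy] at hxy
      have := hfinj hxy
      exact congrArg Subtype.val this
    · intro a ha
      have hmem := hft ⟨a, ha⟩
      rw [Finset.mem_filter] at hmem
      constructor
      · show (if h : a ∈ A then f ⟨a, h⟩ else a) ∈ B \ S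
        rw [dif_pos ha]
        exact hmem.1
      · show G.Adj a (if h : a ∈ A then f ⟨a, h⟩ else a)
        rw [dif_pos ha]
        exact hmem.2
  · -- cardinality of the neighborhood
    have h1 : nbhd G A S = nbhd G A M ∪ nbhd G A F := by
      ext a
      simp only [nbhd, hS, Finset.mem_union, Finset.mem_filter]
      constructor
      · rintro ⟨haA, b, hb, hadj⟩
        rcases hb with h | h
        · exact Or.inl ⟨haA, b, h, hadj⟩
        · exact Or.inr ⟨haA, b, h, hadj⟩
      · rintro (⟨haA, b, hb, hadj⟩ | ⟨haA, b, hb, hadj⟩)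
        · exact ⟨haA, b, Or.inl hb, hadj⟩
        · exact ⟨haA, b, Or.inr hb, hadj⟩
    have h2 : nbhd G A M ∪ nbhd G A F = nbhd G A M ∪ W := by
      apply Finset.Subset.antisymm
      · exact Finset.union_subset Finset.subset_union_left hsub1
      · refine Finset.union_subset Finset.subset_union_left ?_
        intro w hw
        exact Finset.mem_union_right _ (hsub2 hw)
    have hdisjW : Disjoint (nbhd G A M) W := by
      rw [Finset.disjoint_right]
      intro w hw
      exact hWnc w hw
    rw [h1, h2, Finset.card_union_of_disjoint hdisjW, hcovcard, hWF, hFcard]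
    omega
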